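/- Define T_1(z) = z + Σ_{n≥1} n^n z^{n+1}/(n+1)!. Then T_1(z) = 1 − 1/T'(z) as formal power series, where T(z) = Σ_{n≥1} n^{n-2} z^n/n! is the exponential generating function of labelled trees. -/

import Mathlib

open PowerSeries Finset

lemma pow_sub_succ_pow (a : ℝ) (m : ℕ) :
    a^m - (a+1)^m = -∑ j ∈ Finset.range m, (m.choose j : ℝ) * a^j := by
  have h := add_pow a 1 m
  rw [Finset.sum_range_succ] at h
  simp only [one_pow, mul_one, Nat.choose_self, Nat.cast_one] at h
  have h2 : ∑ x ∈ Finset.range m, a ^ x * ((m.choose x : ℝ))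
      = ∑ j ∈ Finset.range m, (m.choose j : ℝ) * a ^ j :=
    Finset.sum_congr rfl (by intros; ring)
  rw [h, h2]; ring

lemma altsum : ∀ (n m : ℕ), m < n → ∀ x : ℝ,
    ∑ k ∈ Finset.range (n+1), (-1:ℝ)^k * (n.choose k) * (x+k)^m = 0 := by
  intro n
  induction n with
  | zero => intro m hm; omega
  | succ n ih =>
    intro m hm x
    set T : ℝ → ℝ := fun y => ∑ k ∈ Finset.range (n+1), (-1:ℝ)^k * (n.choose k) * (y+k)^m with hT
    have h1 : ∑ k ∈ Finset.range (n+2), (-1:ℝ)^k * ((n+1).choose k) * (x+k)^m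
        = T x - T (x+1) := by
      rw [Finset.sum_range_succ']
      have e1 : ∀ i ∈ Finset.range (n+1), (-1:ℝ)^(i+1) * ((n+1).choose (i+1)) * (x+(i+1:ℕ))^m
          = -((-1:ℝ)^i * (n.choose (i+1)) * ((x+1)+i)^m) - (-1:ℝ)^i * (n.choose i) * ((x+1)+i)^m := by
        intro i _
        rw [Nat.choose_succ_succ]
        push_cast
        ring
      rw [Finset.sum_congr rfl e1, Finset.sum_sub_distrib]
      have e2 : ∑ i ∈ Finset.range (n+1), -((-1:ℝ)^i * (n.choose (i+1)) * ((x+1)+i)^m)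
          = T x - (x+(0:ℕ))^m := by
        have hTx : T x = ∑ i ∈ Finset.range n, (-1:ℝ)^(i+1) * (n.choose (i+1)) * (x+(i+1:ℕ))^m + (x+(0:ℕ))^m := by
          rw [hT]; simp only
          rw [Finset.sum_range_succ']
          simp
        rw [hTx, Finset.sum_range_succ]
        simp only [Nat.choose_succ_self, Nat.cast_zero, mul_zero, zero_mul, neg_zero, add_zero]
        rw [add_sub_cancel_right]
        apply Finset.sum_congr rfl
        intro i _
        push_cast
        ring
      rw [e2]
      have e3 : T (x+1) = ∑ i ∈ Finset.range (n+1), (-1:ℝ)^i * (n.choose i) * ((x+1)+i)^m := rfl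
      rw [← e3]
      simp only [Nat.cast_zero, add_zero, Nat.choose_zero_right, Nat.cast_one]
      ring
    rw [h1]
    have h2 : T x - T (x+1) = ∑ k ∈ Finset.range (n+1),
        (-1:ℝ)^k * (n.choose k) * ((x+k)^m - ((x+k)+1)^m) := by
      rw [hT]; simp only
      rw [← Finset.sum_sub_distrib]
      apply Finset.sum_congr rfl
      intro k _
      ring
    rw [h2]
    have h3 : ∀ k ∈ Finset.range (n+1), (-1:ℝ)^k * (n.choose k) * ((x+k)^m - ((x+k)+1)^m)
        = -∑ j ∈ Finset.range m, (m.choose j : ℝ) * ((-1:ℝ)^k * (n.choose k) * (x+k)^j) := by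
      intro k _
      rw [pow_sub_succ_pow (x+k) m, mul_neg, Finset.mul_sum, neg_inj]
      apply Finset.sum_congr rfl
      intro j _
      ring
    rw [Finset.sum_congr rfl h3, Finset.sum_neg_distrib, neg_eq_zero, Finset.sum_comm]
    apply Finset.sum_eq_zero
    intro j hj
    have hjm := Finset.mem_range.mp hj
    rw [← Finset.mul_sum, ih j (by omega) x, mul_zero]

section AbelPoly
open Polynomial

noncomputable def An (n : ℕ) (x c : ℝ) : Polynomial ℝ :=
  (Polynomial.X + Polynomial.C (c+n))^n + ∑ i ∈ Finset.range n,
    Polynomial.C ((n.choose (i+1) : ℝ) * x * (x+(i+1:ℕ))^i) * (Polynomial.X + Polynomial.C (c+(n:ℝ)-(i+1:ℕ)))^(n-(i+1))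

lemma deriv_XC (c : ℝ) (m : ℕ) :
    Polynomial.derivative ((Polynomial.X + Polynomial.C c)^m) = Polynomial.C (m:ℝ) * (Polynomial.X + Polynomial.C c)^(m-1) := by
  rw [Polynomial.derivative_pow]
  simp

lemma abelA : ∀ (n : ℕ) (x c : ℝ), An n x c = (Polynomial.X + Polynomial.C (x + c + n))^n := by
  intro n
  induction n with
  | zero => intro x c; simp [An]
  | succ n ih =>
    intro x c
    have hder : Polynomial.derivative (An (n+1) x c) = Polynomial.C ((n:ℝ)+1) * An n x (c+1) := by
      rw [An, map_add, map_sum, deriv_XC, Finset.sum_range_succ]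
      have htop : Polynomial.derivative (Polynomial.C (((n+1).choose (n+1) : ℝ) * x * (x + ((n+1:ℕ):ℝ))^n) *
          (Polynomial.X + Polynomial.C (c + ((n+1:ℕ):ℝ) - ((n+1:ℕ):ℝ)))^((n+1)-(n+1))) = 0 := by
        simp only [Nat.sub_self, pow_zero, mul_one, Polynomial.derivative_C]
      rw [htop, add_zero, An, mul_add, Finset.mul_sum]
      congr 1
      · have : (n+1) - 1 = n := by omega
        rw [this]
        push_cast
        ring_nf
      · apply Finset.sum_congr rfl
        intro i hi
        have hi' : i < n := Finset.mem_range.mp hi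
        rw [Polynomial.derivative_C_mul, deriv_XC]
        have e1 : c + (((n+1):ℕ):ℝ) - (((i+1):ℕ):ℝ) = c + 1 + (n:ℝ) - (((i+1):ℕ):ℝ) := by
          push_cast; ring
        have e2 : (n+1) - (i+1) - 1 = n - (i+1) := by omega
        have e4 : ((n+1).choose (i+1)) * ((n+1) - (i+1)) = n.choose (i+1) * (n+1) :=
          (Nat.choose_mul_succ_eq n (i+1)).symm
        have e4c : (((n+1).choose (i+1) : ℝ)) * (((n+1) - (i+1) : ℕ) : ℝ)
            = (n.choose (i+1) : ℝ) * ((n:ℝ)+1) := by exact_mod_cast e4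
        rw [e1, e2, ← mul_assoc, ← map_mul, ← mul_assoc, ← map_mul]
        congr 1
        apply congrArg
        linear_combination (x * (x + ((i+1:ℕ):ℝ))^i) * e4c
    -- the difference has zero Polynomial.derivative
    set D := An (n+1) x c - (Polynomial.X + Polynomial.C (x + c + ((n+1:ℕ):ℝ)))^(n+1) with hD
    have hder0 : Polynomial.derivative D = 0 := by
      rw [hD, map_sub, hder, deriv_XC, ih]
      have h1 : x + (c+1) + (n:ℝ) = x + c + ((n+1:ℕ):ℝ) := by push_cast; ring
      have h2 : (n+1) - 1 = n := by omega
      rw [h1, h2]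
      push_cast
      ring
    have hDC : D = Polynomial.C (D.coeff 0) := Polynomial.eq_C_of_derivative_eq_zero hder0
    -- evaluate at -(x+c+(n+1))
    have heval : D.eval (-(x + c + ((n+1:ℕ):ℝ))) = 0 := by
      rw [hD]
      simp only [eval_sub, eval_pow, eval_add, eval_X, eval_C, eval_mul, eval_finset_sum, An]
      have hbase : -(x + c + ((n+1:ℕ):ℝ)) + (x + c + ((n+1:ℕ):ℝ)) = 0 := by ring
      rw [hbase, zero_pow (by omega : n+1 ≠ 0), sub_zero]
      -- now show eval of An is 0 via altsum
      have key := altsum (n+1) n (by omega) x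
      have hb1 : (-(x + c + ((n+1:ℕ):ℝ)) + (c + ((n+1:ℕ):ℝ))) = -x := by ring
      have hterm : ∀ i ∈ Finset.range (n+1),
          ((n+1).choose (i+1) : ℝ) * x * (x + ((i+1:ℕ):ℝ)) ^ i *
            (-(x + c + ((n+1:ℕ):ℝ)) + (c + ((n+1:ℕ):ℝ) - ((i+1:ℕ):ℝ))) ^ ((n+1) - (i+1))
          = x * (-1:ℝ)^(n+1) * ((-1:ℝ)^(i+1) * (((n+1).choose (i+1) : ℝ)) * (x + ((i+1:ℕ):ℝ))^n) := by
        intro i hi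
        have hi' : i < n + 1 := Finset.mem_range.mp hi
        have hb2 : (-(x + c + ((n+1:ℕ):ℝ)) + (c + ((n+1:ℕ):ℝ) - ((i+1:ℕ):ℝ))) = -(x + ((i+1:ℕ):ℝ)) := by
          ring
        have hsplit : (n+1) - (i+1) = n - i := by omega
        rw [hb2, hsplit, neg_pow]
        have hpow : (x + ((i+1:ℕ):ℝ))^i * (x + ((i+1:ℕ):ℝ))^(n-i) = (x + ((i+1:ℕ):ℝ))^n := by
          rw [← pow_add]; congr 1; omega
        have hsign : (-1:ℝ)^(n-i) = (-1:ℝ)^(n+1) * (-1:ℝ)^(i+1) := by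
          have h2 : n+1+(i+1) = (n-i) + 2*(i+1) := by omega
          rw [← pow_add, h2, pow_add, pow_mul]
          norm_num
        rw [hsign, ← hpow]
        ring
      rw [hb1, Finset.sum_congr rfl hterm]
      have hfirst : (-x)^(n+1) = x * (-1:ℝ)^(n+1) * ((-1:ℝ)^0 * (((n+1).choose 0 : ℕ) : ℝ) * (x + ((0:ℕ):ℝ))^n) := by
        simp only [pow_zero, one_mul, Nat.choose_zero_right, Nat.cast_one, Nat.cast_zero, add_zero]
        rw [neg_pow]
        ring
      rw [hfirst, add_comm, ← Finset.sum_range_succ' (fun k => x * (-1:ℝ)^(n+1) * ((-1:ℝ)^k * (((n+1).choose k : ℕ):ℝ) * (x + (k:ℝ))^n)) (n+1), ← Finset.mul_sum, key, mul_zero]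
    rw [hDC] at heval
    simp only [eval_C] at heval
    have : D = 0 := by rw [hDC, heval, map_zero]
    have := sub_eq_zero.mp (hD ▸ this)
    exact this

lemma An_def : ∀ (n : ℕ) (x c : ℝ), An n x c = (Polynomial.X + Polynomial.C (c+(n:ℝ)))^n + ∑ i ∈ Finset.range n,
    Polynomial.C ((n.choose (i+1) : ℝ) * x * (x+(i+1:ℕ))^i) * (Polynomial.X + Polynomial.C (c+(n:ℝ)-(i+1:ℕ)))^(n-(i+1)) :=
  fun _ _ _ => rfl

lemma abel_real (n : ℕ) (x y : ℝ) :
    (y+(n:ℝ))^n + ∑ i ∈ Finset.range n,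
      (n.choose (i+1) : ℝ) * x * (x+((i+1:ℕ):ℝ))^i * (y + ((n:ℝ) - ((i+1:ℕ):ℝ)))^(n-(i+1))
    = (x+y+n)^n := by
  have h := congrArg (Polynomial.eval y) (abelA n x 0)
  rw [An_def] at h
  simp only [eval_add, eval_pow, eval_mul, eval_X, eval_C, eval_finset_sum, zero_add,
    add_zero] at h
  rw [show x+y+(n:ℝ) = y+(x+(n:ℝ)) by ring]
  rw [← h]

lemma abel_target (m : ℕ) :
    ∑ i ∈ Finset.range (m+1), ((m+1).choose (i+1) : ℝ) * (i:ℝ)^i * (((m-i:ℕ):ℝ)+1)^((m-i)-1)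
      = ((m:ℝ)+2)^m := by
  have hI := abel_real (m+1) (-1) 1
  have hII := abel_real m (-1) 2
  -- simplify term bases
  have eI : ∀ i ∈ Finset.range (m+1),
      ((m+1).choose (i+1) : ℝ) * (-1) * ((-1)+((i+1:ℕ):ℝ))^i * (1 + (((m+1:ℕ):ℝ) - ((i+1:ℕ):ℝ)))^((m+1)-(i+1))
      = -(((m+1).choose (i+1) : ℝ) * (i:ℝ)^i * ((((m-i:ℕ):ℝ)+1) * (((m-i:ℕ):ℝ)+1)^((m-i)-1))) := by
    intro i hi
    have him : i ≤ m := by have := Finset.mem_range.mp hi; omega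
    have c1 : (-1:ℝ)+((i+1:ℕ):ℝ) = (i:ℝ) := by push_cast; ring
    have c2 : (1:ℝ) + (((m+1:ℕ):ℝ) - ((i+1:ℕ):ℝ)) = ((m-i:ℕ):ℝ)+1 := by
      have : ((m-i:ℕ):ℝ) = (m:ℝ) - (i:ℝ) := by
        rw [Nat.cast_sub him]
      rw [this]; push_cast; ring
    rcases eq_or_lt_of_le him with heq | hlt
    · subst heq
      rw [c1, c2, Nat.sub_self, show i+1-(i+1) = 0 by omega]
      push_cast
      ring
    · have c3 : (m+1)-(i+1) = ((m-i)-1) + 1 := by omega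
      rw [c1, c2, c3, pow_succ]
      ring
  rw [Finset.sum_congr rfl eI, Finset.sum_neg_distrib] at hI
  have eII : ∀ i ∈ Finset.range m,
      (m.choose (i+1) : ℝ) * (-1) * ((-1)+((i+1:ℕ):ℝ))^i * (2 + (((m:ℕ):ℝ) - ((i+1:ℕ):ℝ)))^(m-(i+1))
      = -((m.choose (i+1) : ℝ) * (i:ℝ)^i * (((m-i:ℕ):ℝ)+1)^((m-i)-1)) := by
    intro i hi
    have him : i + 1 ≤ m := by have := Finset.mem_range.mp hi; omega
    have c1 : (-1:ℝ)+((i+1:ℕ):ℝ) = (i:ℝ) := by push_cast; ring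
    have c2 : (2:ℝ) + (((m:ℕ):ℝ) - ((i+1:ℕ):ℝ)) = ((m-i:ℕ):ℝ)+1 := by
      have : ((m-i:ℕ):ℝ) = (m:ℝ) - (i:ℝ) := by
        rw [Nat.cast_sub (by omega)]
      rw [this]; push_cast; ring
    have c3 : m-(i+1) = (m-i)-1 := by omega
    rw [c1, c2, c3]
    ring
  rw [Finset.sum_congr rfl eII, Finset.sum_neg_distrib] at hII
  -- split (m-i)+1 factor in hI
  have split : ∀ i ∈ Finset.range (m+1),
      ((m+1).choose (i+1) : ℝ) * (i:ℝ)^i * ((((m-i:ℕ):ℝ)+1) * (((m-i:ℕ):ℝ)+1)^((m-i)-1))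
      = ((m:ℝ)+1) * ((m.choose (i+1) : ℝ) * (i:ℝ)^i * (((m-i:ℕ):ℝ)+1)^((m-i)-1))
        + ((m+1).choose (i+1) : ℝ) * (i:ℝ)^i * (((m-i:ℕ):ℝ)+1)^((m-i)-1) := by
    intro i hi
    have him : i ≤ m := by have := Finset.mem_range.mp hi; omega
    have e4 : ((m+1).choose (i+1)) * (m-i) = m.choose (i+1) * (m+1) := by
      have h := (Nat.choose_mul_succ_eq m (i+1)).symm
      rwa [show m+1-(i+1) = m-i by omega] at h
    have e4c : (((m+1).choose (i+1) : ℕ):ℝ) * ((m-i:ℕ):ℝ) = ((m.choose (i+1):ℕ):ℝ) * ((m:ℝ)+1) := by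
      exact_mod_cast e4
    linear_combination ((i:ℝ)^i * (((m-i:ℕ):ℝ)+1)^((m-i)-1)) * e4c
  rw [Finset.sum_congr rfl split, Finset.sum_add_distrib, ← Finset.mul_sum] at hI
  -- the (m+1)-scaled sum: top term i = m vanishes since choose m (m+1) = 0
  rw [Finset.sum_range_succ] at hI
  simp only [Nat.choose_succ_self, Nat.cast_zero, zero_mul, mul_zero, add_zero] at hI
  -- now solve linear equation from hI
  have hpow1 : ((-1:ℝ)+1+((m+1:ℕ):ℝ))^(m+1) = ((m:ℝ)+1)^(m+1) := by push_cast; ring_nf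
  have hpow2 : ((1:ℝ)+((m+1:ℕ):ℝ))^(m+1) = ((m:ℝ)+2)^(m+1) := by push_cast; ring_nf
  have hpow3 : ((-1:ℝ)+2+((m:ℕ):ℝ))^m = ((m:ℝ)+1)^m := by push_cast; ring_nf
  have hpow4 : ((2:ℝ)+((m:ℕ):ℝ))^m = ((m:ℝ)+2)^m := by push_cast; ring_nf
  rw [hpow1, hpow2] at hI
  have expand1 : ((m:ℝ)+2)^(m+1) = ((m:ℝ)+2)^m * ((m:ℝ)+2) := pow_succ _ _
  have expand2 : ((m:ℝ)+1)^(m+1) = ((m:ℝ)+1)^m * ((m:ℝ)+1) := pow_succ _ _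
  rw [hpow3, hpow4] at hII
  have hS2 : ∑ i ∈ Finset.range m, (m.choose (i+1) : ℝ) * (i:ℝ)^i * (((m-i:ℕ):ℝ)+1)^((m-i)-1)
      = ((m:ℝ)+2)^m - ((m:ℝ)+1)^m := by linarith
  rw [hS2] at hI
  linear_combination (-1:ℝ) * hI + expand1 - expand2


end AbelPoly

/-- The EGF of labelled trees, `T(z) = Σ_{n≥1} n^{n-2} z^n/n!`. -/
noncomputable def Ttree : PowerSeries ℝ :=
  PowerSeries.mk fun n => if n = 0 then 0 else (n : ℝ) ^ (n - 2) / (Nat.factorial n)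

/-- `T_1(z) = z + Σ_{n≥1} n^n z^{n+1}/(n+1)!`, i.e. coefficient of `z^m` (m ≥ 1)
is `(m-1)^{m-1}/m!` (with `0^0 = 1`). -/
noncomputable def Tone : PowerSeries ℝ :=
  PowerSeries.mk fun n => if n = 0 then 0 else ((n : ℝ) - 1) ^ (n - 1) / (Nat.factorial n)

lemma coeff_T' (j : ℕ) : (PowerSeries.coeff j (PowerSeries.derivativeFun Ttree))
    = ((j:ℝ)+1)^(j-1) / (j.factorial : ℝ) := by
  rw [show PowerSeries.derivativeFun Ttree = PowerSeries.derivative ℝ Ttree from rfl]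
  rw [PowerSeries.coeff_derivative, Ttree, PowerSeries.coeff_mk, if_neg (Nat.succ_ne_zero j)]
  rw [show (j+1)-2 = j-1 by omega, Nat.factorial_succ]
  have h1 : ((j.factorial : ℕ) : ℝ) ≠ 0 := Nat.cast_ne_zero.2 (Nat.factorial_ne_zero _)
  have h2 : ((j:ℝ)+1) ≠ 0 := by positivity
  push_cast
  field_simp

lemma conv_key (m : ℕ) :
    ∑ i ∈ Finset.range (m+1),
      ((i:ℝ)^i/((i+1).factorial : ℝ)) * ((((m-i:ℕ):ℝ)+1)^((m-i)-1)/((m-i).factorial : ℝ))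
      = ((m:ℝ)+2)^m/((m+1).factorial : ℝ) := by
  rw [← abel_target m, Finset.sum_div]
  apply Finset.sum_congr rfl
  intro i hi
  have him : i + 1 ≤ m + 1 := by have := Finset.mem_range.mp hi; omega
  have hfact := Nat.choose_mul_factorial_mul_factorial him
  rw [show (m+1)-(i+1) = m-i by omega] at hfact
  have hcast : (((m+1).choose (i+1) : ℕ) : ℝ) * (((i+1).factorial : ℕ) : ℝ) * (((m-i).factorial : ℕ) : ℝ)
      = (((m+1).factorial : ℕ) : ℝ) := by exact_mod_cast hfact
  have h1 : (((i+1).factorial : ℕ) : ℝ) ≠ 0 := Nat.cast_ne_zero.2 (Nat.factorial_ne_zero _)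
  have h2 : (((m-i).factorial : ℕ) : ℝ) ≠ 0 := Nat.cast_ne_zero.2 (Nat.factorial_ne_zero _)
  have h3 : (((m+1).factorial : ℕ) : ℝ) ≠ 0 := Nat.cast_ne_zero.2 (Nat.factorial_ne_zero _)
  field_simp
  linear_combination (-1:ℝ) * hcast

/-- `T_1(z) = 1 − 1/T'(z)` as formal power series. -/
theorem stmt_7 : Tone = 1 - (PowerSeries.derivativeFun Ttree)⁻¹ := by
  have hc : PowerSeries.constantCoeff (PowerSeries.derivativeFun Ttree) ≠ 0 := by
    rw [← PowerSeries.coeff_zero_eq_constantCoeff_apply, coeff_T']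
    norm_num
  have hmul : (1 - Tone) * PowerSeries.derivativeFun Ttree = 1 := by
    ext n
    rw [PowerSeries.coeff_mul, Finset.Nat.sum_antidiagonal_eq_sum_range_succ_mk]
    rcases n with _ | m
    · simp [Tone, coeff_T']
    · rw [PowerSeries.coeff_one, if_neg (Nat.succ_ne_zero m)]
      rw [Finset.sum_range_succ']
      have hz : (PowerSeries.coeff 0) (1 - Tone) * (PowerSeries.coeff (m+1-0)) (PowerSeries.derivativeFun Ttree)
          = ((m:ℝ)+2)^m/((m+1).factorial : ℝ) := by
        rw [coeff_T']
        simp [Tone]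
        ring_nf
      rw [hz]
      have hterm : ∀ i ∈ Finset.range (m+1),
          (PowerSeries.coeff (i+1)) (1 - Tone) * (PowerSeries.coeff (m+1-(i+1))) (PowerSeries.derivativeFun Ttree)
          = -(((i:ℝ)^i/((i+1).factorial : ℝ)) * ((((m-i:ℕ):ℝ)+1)^((m-i)-1)/((m-i).factorial : ℝ))) := by
        intro i hi
        rw [show m+1-(i+1) = m-i by omega, coeff_T']
        rw [map_sub, PowerSeries.coeff_one, if_neg (Nat.succ_ne_zero i), Tone, PowerSeries.coeff_mk,
          if_neg (Nat.succ_ne_zero i)]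
        rw [show (i+1)-1 = i by omega]
        push_cast
        ring
      rw [Finset.sum_congr rfl hterm, Finset.sum_neg_distrib, conv_key]
      ring
  rw [(PowerSeries.inv_eq_iff_mul_eq_one hc).mpr hmul]
  ring
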